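/- arXiv:2008.05878 — 2 statements merged into one kernel-verified Lean document; each statement's English description precedes it below -/
import Mathlib

section
/- Let A = [0,L] be an interval partitioned into J subintervals D_j = [a_j, a_{j+1}] with 0 = a_1 < a_2 < ... < a_{J+1} = L, and let ρ > 0 satisfy 2ρ < min_j (a_{j+1} - a_j). Define P_ρ(x) = length(D_j ∩ [x-ρ, x+ρ] ∩ [0,L]) / length([x-ρ, x+ρ] ∩ [0,L]) for x ∈ D_j. Then the average (1/L) ∫_0^L P_ρ(x) dx equals 1 - ((J-1)/2) · (ρ/L). -/
open MeasureTheory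

lemma congr_piece (P g : ℝ → ℝ) (c d : ℝ) (hcd : c ≤ d)
    (hg : IntervalIntegrable g volume c d)
    (h : ∀ x ∈ Set.Ioo c d, P x = g x) :
    IntervalIntegrable P volume c d ∧ ∫ x in c..d, P x = ∫ x in c..d, g x := by
  have hne : ∀ᵐ x : ℝ, x ≠ d := by
    rw [MeasureTheory.ae_iff]
    simpa using Real.volume_singleton (a := d)
  have hae : P =ᵐ[volume.restrict (Set.Ioc c d)] g := by
    refine (MeasureTheory.ae_restrict_iff' measurableSet_Ioc).2 ?_
    filter_upwards [hne] with x hx hmem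
    exact h x ⟨hmem.1, lt_of_le_of_ne hmem.2 hx⟩
  constructor
  · rw [intervalIntegrable_iff_integrableOn_Ioc_of_le hcd]
    exact ((intervalIntegrable_iff_integrableOn_Ioc_of_le hcd).1 hg).congr hae.symm
  · rw [intervalIntegral.integral_of_le hcd, intervalIntegral.integral_of_le hcd]
    exact MeasureTheory.integral_congr_ae hae

/-- average probability of correct match in the one-dimensional case,
for small uncertainty radius. -/
theorem average_match_one_dim (J : ℕ) (hJ : 1 ≤ J) (L ρ : ℝ) (a : ℕ → ℝ)
    (ha0 : a 0 = 0) (haJ : a J = L)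
    (hmono : ∀ j < J, a j < a (j + 1))
    (hρpos : 0 < ρ)
    (hρsmall : ∀ j < J, 2 * ρ < a (j + 1) - a j)
    (P : ℝ → ℝ)
    (hP : ∀ j < J, ∀ x ∈ Set.Ioo (a j) (a (j + 1)),
      P x = (volume (Set.Icc (a j) (a (j + 1)) ∩ Set.Icc (x - ρ) (x + ρ) ∩ Set.Icc 0 L)).toReal
        / (volume (Set.Icc (x - ρ) (x + ρ) ∩ Set.Icc 0 L)).toReal) :
    (1 / L) * ∫ x in (0:ℝ)..L, P x = 1 - (((J : ℝ) - 1) / 2) * (ρ / L) := by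
  have hρ0 : ρ ≠ 0 := ne_of_gt hρpos
  have hmono' : ∀ i j : ℕ, i ≤ j → j ≤ J → a i ≤ a j := by
    intro i j hij hjJ
    induction j with
    | zero => have : i = 0 := Nat.le_zero.mp hij; simp [this]
    | succ k ih =>
      by_cases h : i = k + 1
      · simp [h]
      · have hik : i ≤ k := by omega
        exact le_trans (ih hik (by omega)) (le_of_lt (hmono k (by omega)))
  have ha1 : 2 * ρ < a 1 := by
    have h := hρsmall 0 (by omega); rw [ha0] at h; linarith
  have hL : 0 < L := by
    have h2 := hmono' 1 J hJ le_rfl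
    rw [haJ] at h2; linarith
  -- per-cell computation
  have cell : ∀ j, j < J → IntervalIntegrable P volume (a j) (a (j+1)) ∧
      ∫ x in a j..a (j+1), P x =
        (a (j+1) - a j) - ((if j = 0 then 0 else ρ/4) + (if j+1 = J then 0 else ρ/4)) := by
    intro j hjJ
    have hgap : 2*ρ < a (j+1) - a j := hρsmall j hjJ
    have hc0 : 0 ≤ a j := by
      have := hmono' 0 j (by omega) (by omega); rw [ha0] at this; linarith
    have hdL : a (j+1) ≤ L := by
      have := hmono' (j+1) J (by omega) le_rfl; rw [haJ] at this; linarith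
    -- piece 1 : from a j to a j + ρ
    have p1 : IntervalIntegrable P volume (a j) (a j + ρ) ∧
        ∫ x in a j..(a j + ρ), P x = ρ - (if j = 0 then 0 else ρ/4) := by
      by_cases hj0 : j = 0
      · subst hj0
        have key : ∀ x ∈ Set.Ioo (a 0) (a 0 + ρ), P x = (fun _ : ℝ => (1:ℝ)) x := by
          intro x hx
          have hx1 : a 0 < x := hx.1
          have hx2 : x < a 0 + ρ := hx.2
          rw [hP 0 hjJ x ⟨hx1, by linarith⟩]
          simp only [Set.Icc_inter_Icc, Real.volume_Icc]
          rw [ha0] at hx1 hx2 ⊢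
          simp only [max_eq_left (by linarith : x - ρ ≤ (0:ℝ)), max_self,
            min_eq_right (by linarith : x + ρ ≤ a 1),
            min_eq_left (by linarith : x + ρ ≤ L),
            max_eq_right (by linarith : x - ρ ≤ (0:ℝ))]
          rw [ENNReal.toReal_ofReal (by linarith)]
          rw [div_self (by linarith : x + ρ - 0 ≠ 0)]
        obtain ⟨hi, he⟩ := congr_piece P _ _ _ (by linarith)
          intervalIntegrable_const key
        refine ⟨hi, ?_⟩
        rw [he, intervalIntegral.integral_const, if_pos rfl, smul_eq_mul]
        ring
      · have hc2ρ : 2*ρ < a j := by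
          have := hmono' 1 j (by omega) (by omega); linarith
        have key : ∀ x ∈ Set.Ioo (a j) (a j + ρ),
            P x = (fun x : ℝ => (x - (a j - ρ))/(2*ρ)) x := by
          intro x hx
          have hx1 : a j < x := hx.1
          have hx2 : x < a j + ρ := hx.2
          rw [hP j hjJ x ⟨hx1, by linarith⟩]
          simp only [Set.Icc_inter_Icc, Real.volume_Icc]
          simp only [max_eq_left (by linarith : x - ρ ≤ a j),
            max_eq_left (by linarith : (0:ℝ) ≤ a j),
            min_eq_right (by linarith : x + ρ ≤ a (j+1)),
            min_eq_left (by linarith : x + ρ ≤ L),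
            max_eq_left (by linarith : (0:ℝ) ≤ x - ρ)]
          rw [ENNReal.toReal_ofReal (by linarith), ENNReal.toReal_ofReal (by linarith)]
          rw [show x + ρ - (x - ρ) = 2*ρ by ring, show x + ρ - a j = x - (a j - ρ) by ring]
        obtain ⟨hi, he⟩ := congr_piece P _ _ _ (by linarith)
          (Continuous.intervalIntegrable (by continuity) _ _) key
        refine ⟨hi, ?_⟩
        rw [he, if_neg hj0, intervalIntegral.integral_div,
          intervalIntegral.integral_sub intervalIntegral.intervalIntegrable_id
            intervalIntegrable_const,
          integral_id, intervalIntegral.integral_const, smul_eq_mul]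
        field_simp
        ring
    -- middle piece
    have pmid : IntervalIntegrable P volume (a j + ρ) (a (j+1) - ρ) ∧
        ∫ x in (a j + ρ)..(a (j+1) - ρ), P x = (a (j+1) - a j) - 2*ρ := by
      have key : ∀ x ∈ Set.Ioo (a j + ρ) (a (j+1) - ρ), P x = (fun _ : ℝ => (1:ℝ)) x := by
        intro x hx
        have hx1 : a j + ρ < x := hx.1
        have hx2 : x < a (j+1) - ρ := hx.2
        rw [hP j hjJ x ⟨by linarith, by linarith⟩]
        simp only [Set.Icc_inter_Icc, Real.volume_Icc]
        simp only [max_eq_right (by linarith : a j ≤ x - ρ),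
          max_eq_left (by linarith : (0:ℝ) ≤ x - ρ),
          min_eq_right (by linarith : x + ρ ≤ a (j+1)),
          min_eq_left (by linarith : x + ρ ≤ L)]
        rw [ENNReal.toReal_ofReal (by linarith)]
        rw [div_self (by linarith : x + ρ - (x - ρ) ≠ 0)]
      obtain ⟨hi, he⟩ := congr_piece P _ _ _ (by linarith)
        intervalIntegrable_const key
      refine ⟨hi, ?_⟩
      rw [he, intervalIntegral.integral_const, smul_eq_mul]
      ring
    -- piece 3 : from a (j+1) - ρ to a (j+1)
    have p3 : IntervalIntegrable P volume (a (j+1) - ρ) (a (j+1)) ∧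
        ∫ x in (a (j+1) - ρ)..(a (j+1)), P x = ρ - (if j+1 = J then 0 else ρ/4) := by
      by_cases hjJ' : j + 1 = J
      · have hdLeq : a (j+1) = L := by rw [hjJ', haJ]
        have key : ∀ x ∈ Set.Ioo (a (j+1) - ρ) (a (j+1)), P x = (fun _ : ℝ => (1:ℝ)) x := by
          intro x hx
          have hx1 : a (j+1) - ρ < x := hx.1
          have hx2 : x < a (j+1) := hx.2
          rw [hP j hjJ x ⟨by linarith, hx2⟩]
          simp only [Set.Icc_inter_Icc, Real.volume_Icc]
          rw [hdLeq] at hx1 hx2 hgap hdL ⊢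
          simp only [max_eq_right (by linarith : a j ≤ x - ρ),
            max_eq_left (by linarith : (0:ℝ) ≤ x - ρ)]
          rw [min_comm L (x + ρ), min_assoc, min_self]
          rw [ENNReal.toReal_ofReal (by
            have : x - ρ ≤ min (x + ρ) L := le_min (by linarith) (by linarith)
            linarith)]
          rw [div_self]
          have : x - ρ < min (x + ρ) L := lt_min (by linarith) (by linarith)
          linarith
        obtain ⟨hi, he⟩ := congr_piece P _ _ _ (by linarith)
          intervalIntegrable_const key
        refine ⟨hi, ?_⟩
        rw [he, intervalIntegral.integral_const, if_pos hjJ', smul_eq_mul]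
        ring
      · have hnext : 2*ρ < a (j+2) - a (j+1) := hρsmall (j+1) (by omega)
        have hd2L : a (j+2) ≤ L := by
          have := hmono' (j+2) J (by omega) le_rfl; rw [haJ] at this; linarith
        have key : ∀ x ∈ Set.Ioo (a (j+1) - ρ) (a (j+1)),
            P x = (fun x : ℝ => ((a (j+1) + ρ) - x)/(2*ρ)) x := by
          intro x hx
          have hx1 : a (j+1) - ρ < x := hx.1
          have hx2 : x < a (j+1) := hx.2
          rw [hP j hjJ x ⟨by linarith, hx2⟩]
          simp only [Set.Icc_inter_Icc, Real.volume_Icc]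
          simp only [max_eq_right (by linarith : a j ≤ x - ρ),
            max_eq_left (by linarith : (0:ℝ) ≤ x - ρ),
            min_eq_left (by linarith : a (j+1) ≤ x + ρ),
            min_eq_left (by linarith : a (j+1) ≤ L),
            min_eq_left (by linarith : x + ρ ≤ L)]
          rw [ENNReal.toReal_ofReal (by linarith), ENNReal.toReal_ofReal (by linarith)]
          rw [show x + ρ - (x - ρ) = 2*ρ by ring,
            show a (j+1) - (x - ρ) = (a (j+1) + ρ) - x by ring]
        obtain ⟨hi, he⟩ := congr_piece P _ _ _ (by linarith)
          (Continuous.intervalIntegrable (by continuity) _ _) key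
        refine ⟨hi, ?_⟩
        rw [he, if_neg hjJ', intervalIntegral.integral_div,
          intervalIntegral.integral_sub intervalIntegrable_const
            intervalIntegral.intervalIntegrable_id,
          integral_id, intervalIntegral.integral_const, smul_eq_mul]
        field_simp
        ring
    -- combine the three pieces
    have h12 := intervalIntegral.integral_add_adjacent_intervals p1.1 pmid.1
    have h123 := intervalIntegral.integral_add_adjacent_intervals (p1.1.trans pmid.1) p3.1
    refine ⟨(p1.1.trans pmid.1).trans p3.1, ?_⟩
    rw [← h123, ← h12, p1.2, pmid.2, p3.2]
    ring
  -- assemble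
  have hint : ∀ k < J, IntervalIntegrable P volume (a k) (a (k+1)) := fun k hk => (cell k hk).1
  have key := intervalIntegral.sum_integral_adjacent_intervals hint
  rw [ha0, haJ] at key
  rw [← key]
  have hcongr : ∀ j ∈ Finset.range J, (∫ x in a j..a (j+1), P x) =
      ((a (j+1) - a j) - ((if j = 0 then (0:ℝ) else ρ/4) + (if j+1 = J then 0 else ρ/4))) :=
    fun j hj => (cell j (Finset.mem_range.mp hj)).2
  rw [Finset.sum_congr rfl hcongr, Finset.sum_sub_distrib, Finset.sum_range_sub,
    Finset.sum_add_distrib, ha0, haJ]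
  have hsum1 : ∑ j ∈ Finset.range J, (if j = 0 then (0:ℝ) else ρ/4) = (J:ℝ)*(ρ/4) - ρ/4 := by
    have h1 : ∀ j ∈ Finset.range J,
        (if j = 0 then (0:ℝ) else ρ/4) = ρ/4 - (if j = 0 then ρ/4 else 0) := by
      intro j _; by_cases h : j = 0 <;> simp [h]
    rw [Finset.sum_congr rfl h1, Finset.sum_sub_distrib, Finset.sum_const,
      Finset.sum_ite_eq' (Finset.range J) 0 (fun _ => ρ/4)]
    simp only [Finset.mem_range, Finset.card_range, nsmul_eq_mul]
    rw [if_pos (by omega)]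
  have hsum2 : ∑ j ∈ Finset.range J, (if j+1 = J then (0:ℝ) else ρ/4) = (J:ℝ)*(ρ/4) - ρ/4 := by
    have h2 : ∀ j ∈ Finset.range J,
        (if j+1 = J then (0:ℝ) else ρ/4) = ρ/4 - (if j = J-1 then ρ/4 else 0) := by
      intro j hj
      simp only [Finset.mem_range] at hj
      by_cases h : j + 1 = J
      · simp [show j = J - 1 by omega, show J - 1 + 1 = J by omega]
      · simp [h, show j ≠ J - 1 by omega]
    rw [Finset.sum_congr rfl h2, Finset.sum_sub_distrib, Finset.sum_const,
      Finset.sum_ite_eq' (Finset.range J) (J-1) (fun _ => ρ/4)]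
    simp only [Finset.mem_range, Finset.card_range, nsmul_eq_mul]
    rw [if_pos (by omega)]
  rw [hsum1, hsum2]
  have hJ1 : (1:ℝ) ≤ (J:ℝ) := by exact_mod_cast hJ
  field_simp
  ring
end

section
/- For K ≥ 2 and ρ > 0, let A(t) be the volume of the spherical cap {(y,z) ∈ ℝ^{K-1} × ℝ : z ≥ 0, |y|² + (z+t)² ≤ ρ²}. Then (1/vol(B(0,ρ))) ∫_0^ρ A(t) dt = c_K · ρ, where c_K = Γ(K/2 + 1)/(2√π · Γ((K+3)/2)) and B(0,ρ) is the K-dimensional ball of radius ρ. -/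
open MeasureTheory Real

/-- the average spherical cap volume: (1/vol B(0,ρ)) ∫_0^ρ A(t) dt = c_K ρ. -/
theorem average_cap_volume (K : ℕ) (hK : 2 ≤ K) (ρ : ℝ) (hρ : 0 < ρ)
    (A : ℝ → ENNReal)
    (hA : ∀ t, A t = volume {p : EuclideanSpace ℝ (Fin (K - 1)) × ℝ |
      0 ≤ p.2 ∧ ‖p.1‖ ^ 2 + (p.2 + t) ^ 2 ≤ ρ ^ 2}) :
    (1 / (volume (Metric.closedBall (0 : EuclideanSpace ℝ (Fin K)) ρ)).toReal) *
        ∫ t in (0:ℝ)..ρ, (A t).toReal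
      = (Real.Gamma ((K : ℝ) / 2 + 1) / (2 * Real.sqrt π * Real.Gamma (((K : ℝ) + 3) / 2))) * ρ := by
  set n : ℕ := K - 1 with hn
  have hn1 : 1 ≤ n := by omega
  have hnK : (n : ℝ) = (K : ℝ) - 1 := by
    rw [hn, Nat.cast_sub (by omega)]; norm_num
  set ω : ℝ := Real.sqrt π ^ n / Real.Gamma ((n : ℝ) / 2 + 1) with hω
  have hΓn : 0 < Real.Gamma ((n : ℝ) / 2 + 1) := Real.Gamma_pos_of_pos (by positivity)
  have hωpos : 0 < ω := by
    apply div_pos _ hΓn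
    positivity
  haveI : Nonempty (Fin n) := Fin.pos_iff_nonempty.mp (by omega)
  haveI : Nonempty (Fin K) := Fin.pos_iff_nonempty.mp (by omega)
  set f : ℝ → ℝ := fun s => ω * Real.sqrt (ρ ^ 2 - s ^ 2) ^ n with hf
  have hfc : Continuous f := by
    apply continuous_const.mul
    exact (Real.continuous_sqrt.comp (continuous_const.sub (continuous_pow 2))).pow n
  have hfnn : ∀ s, 0 ≤ f s := fun s => by positivity
  have hfzero : ∀ s, ρ ≤ s → f s = 0 := by
    intro s hs
    have : ρ ^ 2 - s ^ 2 ≤ 0 := by nlinarith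
    simp [hf, Real.sqrt_eq_zero_of_nonpos this, zero_pow (by omega : n ≠ 0)]
  -- Step 1: the cap volume as an integral
  have hcap : ∀ t : ℝ, 0 ≤ t →
      A t = ENNReal.ofReal (∫ z in Set.Ici (0:ℝ), f (z + t)) := by
    intro t ht
    have hS : MeasurableSet {p : EuclideanSpace ℝ (Fin n) × ℝ |
        0 ≤ p.2 ∧ ‖p.1‖ ^ 2 + (p.2 + t) ^ 2 ≤ ρ ^ 2} := by
      have h1 : IsClosed {p : EuclideanSpace ℝ (Fin n) × ℝ | 0 ≤ p.2} :=
        isClosed_le continuous_const continuous_snd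
      have h2 : IsClosed {p : EuclideanSpace ℝ (Fin n) × ℝ |
          ‖p.1‖ ^ 2 + (p.2 + t) ^ 2 ≤ ρ ^ 2} :=
        isClosed_le (((continuous_norm.comp continuous_fst).pow 2).add
          ((continuous_snd.add continuous_const).pow 2)) continuous_const
      exact (h1.inter h2).measurableSet
    have hsec : ∀ z : ℝ, volume ((fun y : EuclideanSpace ℝ (Fin n) => (y, z)) ⁻¹'
        {p : EuclideanSpace ℝ (Fin n) × ℝ | 0 ≤ p.2 ∧ ‖p.1‖ ^ 2 + (p.2 + t) ^ 2 ≤ ρ ^ 2})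
        = (Set.Ici (0:ℝ)).indicator (fun z => ENNReal.ofReal (f (z + t))) z := by
      intro z
      by_cases hz : 0 ≤ z
      · rw [Set.indicator_of_mem (by exact hz)]
        have hpre : (fun y : EuclideanSpace ℝ (Fin n) => (y, z)) ⁻¹'
            {p : EuclideanSpace ℝ (Fin n) × ℝ | 0 ≤ p.2 ∧ ‖p.1‖ ^ 2 + (p.2 + t) ^ 2 ≤ ρ ^ 2}
            = {y : EuclideanSpace ℝ (Fin n) | ‖y‖ ^ 2 ≤ ρ ^ 2 - (z + t) ^ 2} := by
          ext y; simp only [Set.mem_preimage, Set.mem_setOf_eq]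
          constructor
          · rintro ⟨-, h⟩; linarith
          · intro h; exact ⟨hz, by linarith⟩
        rw [hpre]
        by_cases hc : 0 ≤ ρ ^ 2 - (z + t) ^ 2
        · have hball : {y : EuclideanSpace ℝ (Fin n) | ‖y‖ ^ 2 ≤ ρ ^ 2 - (z + t) ^ 2}
              = Metric.closedBall 0 (Real.sqrt (ρ ^ 2 - (z + t) ^ 2)) := by
            ext y
            simp only [Set.mem_setOf_eq, Metric.mem_closedBall, dist_zero_right]
            rw [← Real.le_sqrt (norm_nonneg y) hc]
          rw [hball, EuclideanSpace.volume_closedBall, Fintype.card_fin]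
          have hfe : f (z + t) = ω * Real.sqrt (ρ ^ 2 - (z + t) ^ 2) ^ n := rfl
          rw [hfe, ENNReal.ofReal_mul hωpos.le,
            ← ENNReal.ofReal_pow (Real.sqrt_nonneg _)]
          ring
        · have hempty : {y : EuclideanSpace ℝ (Fin n) | ‖y‖ ^ 2 ≤ ρ ^ 2 - (z + t) ^ 2}
              = ∅ := by
            ext y
            simp only [Set.mem_setOf_eq, Set.mem_empty_iff_false, iff_false, not_le]
            have := sq_nonneg ‖y‖
            nlinarith
          have hf0 : f (z + t) = 0 := by
            simp only [hf]
            rw [Real.sqrt_eq_zero_of_nonpos (le_of_lt (not_le.mp hc)),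
              zero_pow (by omega : n ≠ 0), mul_zero]
          rw [hempty, measure_empty, hf0, ENNReal.ofReal_zero]
      · rw [Set.indicator_of_notMem (by exact hz)]
        have : (fun y : EuclideanSpace ℝ (Fin n) => (y, z)) ⁻¹'
            {p : EuclideanSpace ℝ (Fin n) × ℝ | 0 ≤ p.2 ∧ ‖p.1‖ ^ 2 + (p.2 + t) ^ 2 ≤ ρ ^ 2}
            = ∅ := by
          ext y; simp only [Set.mem_preimage, Set.mem_setOf_eq, Set.mem_empty_iff_false,
            iff_false, not_and]
          intro h; exact absurd h hz
        rw [this, measure_empty]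
    have hint : Integrable (fun z => f (z + t)) (volume.restrict (Set.Ici (0:ℝ))) := by
      apply Integrable.restrict
      apply Continuous.integrable_of_hasCompactSupport
        (hfc.comp (continuous_id.add continuous_const))
      apply HasCompactSupport.intro (isCompact_Icc (a := -ρ - t) (b := ρ - t))
      intro x hx
      simp only [Set.mem_Icc, not_and_or, not_le] at hx
      rcases hx with hx | hx
      · show f (x + t) = 0
        have : ρ ^ 2 - (x + t) ^ 2 ≤ 0 := by
          nlinarith [mul_pos (show (0:ℝ) < -(x + t + ρ) by linarith)
            (show (0:ℝ) < -(x + t - ρ) by linarith)]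
        simp [hf, Real.sqrt_eq_zero_of_nonpos this, zero_pow (by omega : n ≠ 0)]
      · show f (x + t) = 0
        exact hfzero _ (by linarith)
    rw [hA t, hn, Measure.volume_eq_prod, Measure.prod_apply_symm hS]
    rw [lintegral_congr hsec, lintegral_indicator measurableSet_Ici _]
    rw [← MeasureTheory.ofReal_integral_eq_lintegral_ofReal hint
      (Filter.Eventually.of_forall fun z => hfnn _)]
  -- Step 2: reduce the Ici-integral to an interval integral
  have hIci : ∀ t : ℝ, 0 ≤ t → t ≤ ρ →
      (∫ z in Set.Ici (0:ℝ), f (z + t)) = ∫ s in t..ρ, f s := by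
    intro t ht htρ
    have hind : (Set.Ici (0:ℝ)).indicator (fun z => f (z + t))
        = (Set.Icc (0:ℝ) (ρ - t)).indicator (fun z => f (z + t)) := by
      funext z
      by_cases hz : z ∈ Set.Icc (0:ℝ) (ρ - t)
      · rw [Set.indicator_of_mem hz, Set.indicator_of_mem (by exact hz.1)]
      · rw [Set.indicator_of_notMem hz]
        by_cases hz0 : 0 ≤ z
        · rw [Set.indicator_of_mem (by exact hz0)]
          simp only [Set.mem_Icc, not_and_or, not_le] at hz
          rcases hz with h | h
          · exact absurd hz0 (not_le.mpr h)
          · exact hfzero _ (by linarith)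
        · rw [Set.indicator_of_notMem (by exact hz0)]
    rw [← integral_indicator measurableSet_Ici, hind,
      integral_indicator measurableSet_Icc,
      MeasureTheory.integral_Icc_eq_integral_Ioc,
      ← intervalIntegral.integral_of_le (by linarith : (0:ℝ) ≤ ρ - t),
      intervalIntegral.integral_comp_add_right (fun s => f s), zero_add, sub_add_cancel]
  -- combine: (A t).toReal = ∫ s in t..ρ, f s for t ∈ [0, ρ]
  have hA' : ∀ t ∈ Set.uIcc (0:ℝ) ρ, (A t).toReal = ∫ s in t..ρ, f s := by
    intro t ht
    rw [Set.uIcc_of_le hρ.le] at ht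
    rw [hcap t ht.1, hIci t ht.1 ht.2, ENNReal.toReal_ofReal]
    apply intervalIntegral.integral_nonneg ht.2
    intro u _; exact hfnn u
  -- Step 3: integration by parts
  have hfint : ∀ a b : ℝ, IntervalIntegrable f volume a b := fun a b =>
    hfc.intervalIntegrable a b
  set F : ℝ → ℝ := fun t => ∫ s in t..ρ, f s with hF
  have hFderiv : ∀ t : ℝ, HasDerivAt F (-(f t)) t := by
    intro t
    have h1 : HasDerivAt (fun u => ∫ s in (0:ℝ)..u, f s) (f t) t :=
      intervalIntegral.integral_hasDerivAt_right (hfint 0 t)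
        (hfc.stronglyMeasurableAtFilter _ _) hfc.continuousAt
    have h2 : F = fun u => (∫ s in (0:ℝ)..ρ, f s) - ∫ s in (0:ℝ)..u, f s := by
      funext u
      rw [hF]
      exact (intervalIntegral.integral_interval_sub_left (hfint 0 ρ) (hfint 0 u)).symm
    rw [h2]
    simpa using (h1.const_sub (∫ s in (0:ℝ)..ρ, f s))
  have hparts : (∫ t in (0:ℝ)..ρ, F t) = ∫ t in (0:ℝ)..ρ, t * f t := by
    have h := intervalIntegral.integral_mul_deriv_eq_deriv_mul
      (u := F) (u' := fun t => -(f t)) (v := fun t => t) (v' := fun _ => (1:ℝ))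
      (a := 0) (b := ρ)
      (fun x _ => hFderiv x) (fun x _ => hasDerivAt_id x)
      ((hfc.neg).intervalIntegrable 0 ρ) (continuous_const.intervalIntegrable 0 ρ)
    have hFρ : F ρ = 0 := intervalIntegral.integral_same
    rw [hFρ] at h
    simp only [mul_one, mul_zero, zero_mul, zero_sub, sub_zero] at h
    rw [h, ← intervalIntegral.integral_neg]
    apply intervalIntegral.integral_congr
    intro x _
    show -(-(f x) * x) = x * f x
    ring
  -- Step 4: FTC for ∫ t * f t
  have hval : (∫ t in (0:ℝ)..ρ, t * f t) = ω / ((n : ℝ) + 2) * ρ ^ (n + 2) := by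
    set p : ℝ := ((n : ℝ) + 2) / 2 with hp
    have hp1 : 1 ≤ p := by
      rw [hp]
      have : (1:ℝ) ≤ (n : ℝ) := by exact_mod_cast hn1
      linarith
    have hpm : p - 1 = (n : ℝ) / 2 := by rw [hp]; ring
    set φ : ℝ → ℝ := fun x => x * (ω * (ρ ^ 2 - x ^ 2) ^ ((n : ℝ) / 2)) with hφ
    have hcongr : Set.EqOn (fun x => x * f x) φ (Set.uIcc 0 ρ) := by
      intro x hx
      rw [Set.uIcc_of_le hρ.le] at hx
      have hc : 0 ≤ ρ ^ 2 - x ^ 2 := by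
        rcases hx with ⟨h1, h2⟩; nlinarith
      simp only [hφ, hf]
      congr 2
      rw [Real.sqrt_eq_rpow, ← Real.rpow_natCast ((ρ ^ 2 - x ^ 2) ^ (1/2 : ℝ)) n,
        ← Real.rpow_mul hc]
      congr 1
      ring
    set G : ℝ → ℝ := fun x => -(ω / ((n : ℝ) + 2)) * (ρ ^ 2 - x ^ 2) ^ p with hG
    have hGderiv : ∀ x ∈ Set.uIcc (0:ℝ) ρ, HasDerivAt G (φ x) x := by
      intro x _
      have h1 : HasDerivAt (fun x : ℝ => ρ ^ 2 - x ^ 2) (-(2 * x)) x := by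
        simpa using ((hasDerivAt_pow 2 x).const_sub (ρ ^ 2))
      have h2 : HasDerivAt (fun y : ℝ => y ^ p) (p * (ρ ^ 2 - x ^ 2) ^ (p - 1))
          (ρ ^ 2 - x ^ 2) := Real.hasDerivAt_rpow_const (Or.inr hp1)
      have h3 := (h2.comp x h1).const_mul (-(ω / ((n : ℝ) + 2)))
      refine HasDerivAt.congr_deriv h3 ?_
      rw [hpm, hφ, hp]
      have hne : ((n : ℝ) + 2) ≠ 0 := by positivity
      field_simp
    have hφc : Continuous φ := by
      apply continuous_id.mul
      apply continuous_const.mul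
      exact (Real.continuous_rpow_const (by positivity)).comp
        (continuous_const.sub (continuous_pow 2))
    rw [intervalIntegral.integral_congr hcongr,
      intervalIntegral.integral_eq_sub_of_hasDerivAt hGderiv (hφc.intervalIntegrable 0 ρ)]
    have hz1 : (ρ ^ 2 - ρ ^ 2 : ℝ) = 0 := by ring
    have hz2 : (ρ ^ 2 - 0 ^ 2 : ℝ) = ρ ^ 2 := by ring
    have hsub : (ρ ^ 2 : ℝ) ^ p = ρ ^ (n + 2) := by
      rw [← Real.rpow_natCast ρ 2, ← Real.rpow_mul hρ.le, ← Real.rpow_natCast ρ (n + 2)]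
      congr 1
      rw [hp]
      push_cast
      ring
    simp only [hG, hz1, hz2, Real.zero_rpow (by positivity : (0:ℝ) < p).ne', hsub]
    ring
  -- Step 5: assemble
  rw [intervalIntegral.integral_congr hA', hparts, hval]
  rw [EuclideanSpace.volume_closedBall, Fintype.card_fin]
  rw [ENNReal.toReal_mul, ENNReal.toReal_pow, ENNReal.toReal_ofReal hρ.le,
    ENNReal.toReal_ofReal (by positivity)]
  -- now pure real algebra
  have hΓK : 0 < Real.Gamma ((K : ℝ) / 2 + 1) := Real.Gamma_pos_of_pos (by positivity)
  have hΓ3 : Real.Gamma (((K : ℝ) + 3) / 2)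
      = (((K : ℝ) + 1) / 2) * Real.Gamma (((K : ℝ) + 1) / 2) := by
    have h := Real.Gamma_add_one (s := ((K : ℝ) + 1) / 2) (by positivity)
    rw [show ((K : ℝ) + 1) / 2 + 1 = ((K : ℝ) + 3) / 2 by ring] at h
    exact h
  have hΓK1 : 0 < Real.Gamma (((K : ℝ) + 1) / 2) := Real.Gamma_pos_of_pos (by positivity)
  have hΓnval : Real.Gamma ((n : ℝ) / 2 + 1) = Real.Gamma (((K : ℝ) + 1) / 2) := by
    rw [hnK]; congr 1; ring
  have hpow : ρ ^ (n + 2) = ρ ^ K * ρ := by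
    rw [show n + 2 = K + 1 by omega, pow_succ]
  have hpowπ : Real.sqrt π ^ K = Real.sqrt π ^ n * Real.sqrt π := by
    rw [show K = n + 1 by omega, pow_succ]
  have hsqπ : 0 < Real.sqrt π := Real.sqrt_pos.mpr Real.pi_pos
  rw [hω, hΓ3, hΓnval, hpow, hpowπ, hnK]
  have hρK : (0:ℝ) < ρ ^ K := by positivity
  have hπn : (0:ℝ) < Real.sqrt π ^ n := by positivity
  have hK1 : ((K : ℝ) + 1) ≠ 0 := by positivity
  rw [show ((K : ℝ) - 1 + 2) = (K : ℝ) + 1 by ring]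
  field_simp [hΓK.ne', hΓK1.ne', hsqπ.ne', hρK.ne', hπn.ne', hK1]
end
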